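/- Given a fixed cut B in a graph and an integer n, there are only finitely many tight cuts A of capacity n that cross B (i.e., are not nested with B). -/

import Mathlib

open Set

variable {V : Type*}

/-- The coboundary of a vertex set: edges with one endpoint in `A` and one outside. -/
def cobound (G : SimpleGraph V) (A : Set V) : Set (Sym2 V) :=
  {e | e ∈ G.edgeSet ∧ ∃ u v, e = s(u, v) ∧ u ∈ A ∧ v ∉ A}

/-- A cut is a vertex set with finite coboundary. -/
def IsCut (G : SimpleGraph V) (A : Set V) : Prop := (cobound G A).Finite

/-- Capacity of a cut: sum of capacities of coboundary edges. -/
noncomputable def cap (G : SimpleGraph V) (c : Sym2 V → ℕ) (A : Set V) : ℕ :=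
  ∑ᶠ e ∈ cobound G A, c e

/-- A cut is tight if both sides induce connected subgraphs. -/
def Tight (G : SimpleGraph V) (A : Set V) : Prop :=
  (G.induce A).Connected ∧ (G.induce Aᶜ).Connected

/-- Two cuts are nested if one of the four corners is empty. -/
def Nested (A B : Set V) : Prop :=
  A ∩ B = ∅ ∨ A ∩ Bᶜ = ∅ ∨ Aᶜ ∩ B = ∅ ∨ Aᶜ ∩ Bᶜ = ∅

lemma cobound_deleteEdges (G : SimpleGraph V) (e₀ : Sym2 V) (A : Set V) :
    cobound (G.deleteEdges {e₀}) A = cobound G A \ {e₀} := by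
  ext f
  simp only [cobound, Set.mem_setOf_eq, Set.mem_diff, Set.mem_singleton_iff,
    SimpleGraph.edgeSet_deleteEdges]
  tauto

lemma induce_deleteEdges_eq (G : SimpleGraph V) {x y : V} {A : Set V}
    (h : x ∉ A ∨ y ∉ A) :
    (G.deleteEdges {s(x, y)}).induce A = G.induce A := by
  ext a b
  simp only [SimpleGraph.comap_adj, Function.Embedding.coe_subtype,
    SimpleGraph.deleteEdges_adj, Set.mem_singleton_iff]
  constructor
  · exact fun hh => hh.1
  · intro hadj
    refine ⟨hadj, fun heq => ?_⟩
    rw [Sym2.eq_iff] at heq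
    rcases heq with ⟨hax, hby⟩ | ⟨hay, hbx⟩
    · rcases h with h | h
      · exact h (hax ▸ a.2)
      · exact h (hby ▸ b.2)
    · rcases h with h | h
      · exact h (hbx ▸ b.2)
      · exact h (hay ▸ a.2)

lemma mem_cobound_of_adj {G : SimpleGraph V} {A : Set V} {x y : V}
    (hxy : G.Adj x y) (hx : x ∈ A) (hy : y ∉ A) : s(x, y) ∈ cobound G A :=
  ⟨G.mem_edgeSet.mpr hxy, x, y, rfl, hx, hy⟩

/-- Reachability within an induced connected subgraph gives reachability in the ambient graph. -/
lemma reachable_of_induce_connected {G : SimpleGraph V} {A : Set V}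
    (hA : (G.induce A).Connected) {u v : V} (hu : u ∈ A) (hv : v ∈ A) :
    G.Reachable u v := by
  have := (hA.preconnected ⟨u, hu⟩ ⟨v, hv⟩).map (SimpleGraph.Embedding.induce A).toHom
  simpa using this

/-- Key finiteness lemma (Thomassen–Woess style, by induction on the cut size):
for any graph `G` and adjacent vertices `x y`, there are only finitely many tight cuts `A`
with `x ∈ A`, `y ∉ A` and finite coboundary of size at most `k`. -/
lemma key_finite : ∀ (k : ℕ) (G : SimpleGraph V) (x y : V), G.Adj x y →
    {A : Set V | Tight G A ∧ (cobound G A).Finite ∧ (cobound G A).ncard ≤ k ∧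
      x ∈ A ∧ y ∉ A}.Finite := by
  classical
  intro k
  induction k with
  | zero =>
    intro G x y hxy
    convert Set.finite_empty
    ext A
    simp only [Set.mem_setOf_eq, Set.mem_empty_iff_false, iff_false, not_and]
    intro _ hfin hcard hx hy
    have hmem : s(x, y) ∈ cobound G A := mem_cobound_of_adj hxy hx hy
    have : (cobound G A).ncard = 0 := Nat.le_zero.mp hcard
    have : cobound G A = ∅ := (Set.ncard_eq_zero hfin).mp this
    simp [this] at hmem
  | succ k ih =>
    intro G x y hxy
    set G' := G.deleteEdges {s(x, y)} with hG'
    by_cases hreach : G'.Reachable x y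
    · obtain ⟨Q⟩ := hreach
      apply Set.Finite.subset
        (Set.Finite.biUnion (Q.darts.toFinset.finite_toSet)
          (fun d _ => ih G' d.fst d.snd d.adj))
      intro A hA
      obtain ⟨hT, hfin, hcard, hx, hy⟩ := hA
      -- A is a tight cut of G' with coboundary of size ≤ k
      have hcb : cobound G' A = cobound G A \ {s(x, y)} := cobound_deleteEdges G _ A
      have hmem : s(x, y) ∈ cobound G A := mem_cobound_of_adj hxy hx hy
      have hfin' : (cobound G' A).Finite := by
        rw [hcb]; exact hfin.diff
      have hcard' : (cobound G' A).ncard ≤ k := by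
        rw [hcb, Set.ncard_diff (Set.singleton_subset_iff.mpr hmem) (Set.finite_singleton _)]
        rw [Set.ncard_singleton]
        omega
      have hT' : Tight G' A := by
        constructor
        · rw [hG', induce_deleteEdges_eq G (Or.inr hy)]; exact hT.1
        · rw [hG', induce_deleteEdges_eq G (Or.inl (by simpa using hx))]; exact hT.2
      obtain ⟨d, hd, hdf, hds⟩ := Q.exists_boundary_dart A hx hy
      exact Set.mem_biUnion (List.mem_toFinset.mpr hd) ⟨hT', hfin', hcard', hdf, hds⟩
    · -- x and y are in different components of G' : A is forced to be the component of x
      apply Set.Finite.subset (Set.finite_singleton {v | G'.Reachable x v})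
      intro A hA
      obtain ⟨hT, _, _, hx, hy⟩ := hA
      have hT' : Tight G' A := by
        constructor
        · rw [hG', induce_deleteEdges_eq G (Or.inr hy)]; exact hT.1
        · rw [hG', induce_deleteEdges_eq G (Or.inl (by simpa using hx))]; exact hT.2
      have hsub : A ⊆ {v | G'.Reachable x v} := by
        intro a ha
        exact reachable_of_induce_connected hT'.1 hx ha
      have hsup : {v | G'.Reachable x v} ⊆ A := by
        intro v hv
        by_contra hvA
        have : G'.Reachable y v :=
          reachable_of_induce_connected hT'.2 (by simpa using hy) (by simpa using hvA)
        exact hreach (hv.trans this.symm)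
      exact Set.mem_singleton_iff.mpr (Set.Subset.antisymm hsub hsup)

/-- If the induced graph on `A` is connected and `A` meets both `B` and `Bᶜ`, then there is an
edge of `G` inside `A` crossing `B`. -/
lemma exists_crossing_edge {G : SimpleGraph V} {A B : Set V}
    (hA : (G.induce A).Connected) {u v : V} (hu : u ∈ A) (huB : u ∈ B)
    (hv : v ∈ A) (hvB : v ∉ B) :
    ∃ p q : V, G.Adj p q ∧ p ∈ A ∧ q ∈ A ∧ p ∈ B ∧ q ∉ B := by
  obtain ⟨w⟩ := hA.preconnected ⟨u, hu⟩ ⟨v, hv⟩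
  obtain ⟨d, _, hdf, hds⟩ := w.exists_boundary_dart {a : A | (a : V) ∈ B} huB hvB
  refine ⟨d.fst, d.snd, ?_, d.fst.2, d.snd.2, hdf, hds⟩
  have := d.adj
  simpa using this

lemma ncard_cobound_le_cap {G : SimpleGraph V} {c : Sym2 V → ℕ} {A : Set V}
    (hA : IsCut G A) (hc : ∀ e ∈ G.edgeSet, 1 ≤ c e) :
    (cobound G A).ncard ≤ cap G c A := by
  rw [cap, finsum_mem_eq_finite_toFinset_sum _ hA, Set.ncard_eq_toFinset_card _ hA]
  calc hA.toFinset.card = ∑ _e ∈ hA.toFinset, 1 := by simp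
    _ ≤ ∑ e ∈ hA.toFinset, c e :=
        Finset.sum_le_sum (fun e he => hc e ((hA.mem_toFinset.mp he).1))

/-- given a fixed cut `B` and an integer `n`, only finitely many tight cuts of
capacity `n` cross `B`. -/
theorem finitely_many_crossing_tight_cuts (G : SimpleGraph V) (hconn : G.Connected)
    (c : Sym2 V → ℕ) (hc : ∀ e ∈ G.edgeSet, 1 ≤ c e)
    (B : Set V) (hB : IsCut G B) (n : ℕ) :
    {A : Set V | IsCut G A ∧ Tight G A ∧ cap G c A = n ∧ ¬ Nested A B}.Finite := by
  classical
  -- the set of endpoints of edges in the coboundary of B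
  set S₀ : Set V := ⋃ e ∈ cobound G B, {v | v ∈ e} with hS₀def
  have hS₀ : S₀.Finite := by
    refine hB.biUnion (fun e _ => ?_)
    induction e using Sym2.ind with
    | _ a b =>
      apply Set.Finite.subset ((Set.finite_singleton b).insert a)
      intro v hv
      simp only [Set.mem_setOf_eq, Sym2.mem_iff] at hv
      simpa using hv
  -- fixed walks between pairs of vertices
  have hW : ∀ s t : V, G.Walk s t := fun s t => (hconn.preconnected s t).some
  apply Set.Finite.subset
    (Set.Finite.biUnion hS₀ (fun s _ => Set.Finite.biUnion hS₀ (fun t _ =>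
      Set.Finite.biUnion ((hW s t).darts.toFinset.finite_toSet)
        (fun d _ => key_finite n G d.fst d.snd d.adj))))
  intro A hA
  obtain ⟨h1, h2, h3, h4⟩ := hA
  rw [Nested] at h4
  push_neg at h4
  obtain ⟨c1, c2, c3, c4⟩ := h4
  obtain ⟨u1, hu1A, hu1B⟩ := c1
  obtain ⟨u2, hu2A, hu2B⟩ := c2
  obtain ⟨u3, hu3A, hu3B⟩ := c3
  obtain ⟨u4, hu4A, hu4B⟩ := c4
  -- an edge of δB inside A gives a vertex of S₀ in A
  obtain ⟨p, q, hpq, hpA, hqA, hpB, hqB⟩ :=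
    exists_crossing_edge h2.1 hu1A hu1B hu2A (by simpa using hu2B)
  have hpS₀ : p ∈ S₀ := by
    refine Set.mem_biUnion (mem_cobound_of_adj hpq hpB hqB) ?_
    simp
  -- an edge of δB inside Aᶜ gives a vertex of S₀ in Aᶜ
  obtain ⟨p', q', hpq', hpA', hqA', hpB', hqB'⟩ :=
    exists_crossing_edge h2.2 hu3A hu3B hu4A (by simpa using hu4B)
  have hpS₀' : p' ∈ S₀ := by
    refine Set.mem_biUnion (mem_cobound_of_adj hpq' hpB' hqB') ?_
    simp
  -- the fixed walk from p to p' crosses δA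
  obtain ⟨d, hd, hdf, hds⟩ := (hW p p').exists_boundary_dart A hpA (by simpa using hpA')
  refine Set.mem_biUnion hpS₀ (Set.mem_biUnion hpS₀' (Set.mem_biUnion
    (List.mem_toFinset.mpr hd) ?_))
  refine ⟨h2, h1, ?_, hdf, hds⟩
  rw [← h3]
  exact ncard_cobound_le_cap h1 hc
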